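/- Let û(z) be the unique formal power series with û(0)=0 satisfying û = z + z·û^(k+1). Then as formal Laurent series, û^(−k) = z^(−k) − z · Σ_{λ≥0} (k/(λ+1)) · binomial((k+1)λ, λ) · z^((k+1)λ). -/

import Mathlib

open PowerSeries

noncomputable def Dop (f : PowerSeries ℚ) : PowerSeries ℚ := X * d⁄dX ℚ f

lemma coeff_Dop (f : PowerSeries ℚ) (n : ℕ) : coeff n (Dop f) = n * coeff n f := by
  cases n with
  | zero => simp [Dop]
  | succ m => rw [Dop, coeff_succ_X_mul, coeff_derivative]; push_cast; ring

lemma Dop_add (f g : PowerSeries ℚ) : Dop (f+g) = Dop f + Dop g := by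
  unfold Dop; rw [map_add]; ring

lemma Dop_mul (f g : PowerSeries ℚ) : Dop (f*g) = f * Dop g + g * Dop f := by
  unfold Dop; rw [Derivation.leibniz]; simp [smul_eq_mul]; ring

lemma Dop_one : Dop 1 = 0 := by simp [Dop]

lemma Dop_pow (f : PowerSeries ℚ) (m : ℕ) :
    Dop (f^m) = (m : PowerSeries ℚ) * f^(m-1) * Dop f := by
  unfold Dop; rw [Derivation.leibniz_pow]
  simp [smul_eq_mul]; ring

lemma Dop_X_pow (m : ℕ) : Dop ((X : PowerSeries ℚ)^m) = (m : PowerSeries ℚ) * X^m := by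
  rw [Dop_pow]
  unfold Dop; rw [derivative_X]
  cases m with
  | zero => simp
  | succ l =>
    have : l + 1 - 1 = l := rfl
    rw [this, mul_one, pow_succ]
    ring

lemma masterODE (k : ℕ) (v : PowerSeries ℚ) (hv : v = 1 + X^(k+1) * v^(k+1)) :
    Dop v * v = ((k : PowerSeries ℚ)+1) * (v - 1) * (Dop v + v) := by
  have hXv : X^(k+1) * v^(k+1) = v - 1 := by linear_combination - hv
  have h1 : Dop v = X^(k+1) * (((k:PowerSeries ℚ)+1) * v^k * Dop v)
      + v^(k+1) * (((k:PowerSeries ℚ)+1) * X^(k+1)) := by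
    conv_lhs => rw [hv]
    rw [Dop_add, Dop_one, Dop_mul, Dop_pow, Dop_X_pow]
    have : k + 1 - 1 = k := rfl
    rw [this]
    push_cast
    ring
  have hvk : X^(k+1) * v^k * v = v - 1 := by
    rw [show X^(k+1) * v^k * v = X^(k+1)*v^(k+1) by ring, hXv]
  linear_combination v * h1 + (((k:PowerSeries ℚ)+1) * Dop v) * hvk
    + (((k:PowerSeries ℚ)+1) * v) * hXv

noncomputable def Apow (v w : PowerSeries ℚ) (j : ℤ) : PowerSeries ℚ :=
  if 0 ≤ j then v ^ j.toNat else w ^ (-j).toNat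

lemma Apow_natCast (v w : PowerSeries ℚ) (m : ℕ) : Apow v w m = v ^ m := by
  simp [Apow]

lemma Apow_neg_natCast (v w : PowerSeries ℚ) (m : ℕ) : Apow v w (-(m:ℤ)) = w ^ m := by
  cases m with
  | zero => simp [Apow]
  | succ l =>
    rw [Apow, if_neg (by omega)]
    simp

lemma Apow_zero (v w : PowerSeries ℚ) : Apow v w 0 = 1 := by simp [Apow]

lemma Apow_succ (v w : PowerSeries ℚ) (hw : w * v = 1) (j : ℤ) :
    Apow v w (j+1) = Apow v w j * v := by
  rcases le_or_gt 0 j with h | h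
  · obtain ⟨m, rfl⟩ := Int.eq_ofNat_of_zero_le h
    rw [show ((m:ℤ)+1) = ((m+1:ℕ):ℤ) by push_cast; ring,
      Apow_natCast, Apow_natCast, pow_succ]
  · obtain ⟨m, rfl⟩ : ∃ m:ℕ, j = -((m:ℤ)+1) := ⟨(-(j+1)).toNat, by omega⟩
    rw [show (-((m:ℤ)+1)+1) = -((m:ℕ):ℤ) by ring,
      show (-((m:ℤ)+1)) = -(((m+1:ℕ)):ℤ) by push_cast; ring,
      Apow_neg_natCast, Apow_neg_natCast, pow_succ]
    rw [mul_assoc, hw, mul_one]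

lemma Dop_w (v w : PowerSeries ℚ) (hw : w * v = 1) : Dop w = -(w^2 * Dop v) := by
  have h2 : w * Dop v + v * Dop w = 0 := by
    have h := Dop_mul w v
    rw [hw, Dop_one] at h
    linear_combination - h
  linear_combination w * h2 - Dop w * hw

lemma Dop_Apow (v w : PowerSeries ℚ) (hw : w * v = 1) (j : ℤ) :
    Dop (Apow v w j) = (j : PowerSeries ℚ) * Apow v w (j-1) * Dop v := by
  rcases lt_or_ge 0 j with h | h
  · obtain ⟨m, rfl⟩ : ∃ m:ℕ, j = (m:ℤ)+1 := ⟨(j-1).toNat, by omega⟩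
    rw [show ((m:ℤ)+1) = ((m+1:ℕ):ℤ) by push_cast; ring, Apow_natCast,
      show (((m+1:ℕ):ℤ)-1) = ((m:ℕ):ℤ) by push_cast; ring, Apow_natCast, Dop_pow]
    have : m + 1 - 1 = m := rfl
    rw [this]
    push_cast
    ring
  · obtain ⟨m, rfl⟩ : ∃ m:ℕ, j = -((m:ℕ):ℤ) := ⟨(-j).toNat, by omega⟩
    rw [Apow_neg_natCast, show (-((m:ℕ):ℤ)-1) = -(((m+1:ℕ)):ℤ) by push_cast; ring,
      Apow_neg_natCast, Dop_pow, Dop_w v w hw]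
    cases m with
    | zero => simp
    | succ l =>
      have : l + 1 - 1 = l := rfl
      rw [this]
      push_cast
      ring

lemma star (k : ℕ) (v w : PowerSeries ℚ) (hv : v = 1 + X^(k+1) * v^(k+1))
    (hw : w * v = 1) (j : ℤ) :
    ((k:PowerSeries ℚ)+1) * ((j:PowerSeries ℚ)+1) * Dop (Apow v w j)
      - (k:PowerSeries ℚ) * (j:PowerSeries ℚ) * Dop (Apow v w (j+1))
    = ((k:PowerSeries ℚ)+1) * (j:PowerSeries ℚ) * ((j:PowerSeries ℚ)+1)
        * (Apow v w (j+1) - Apow v w j) := by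
  have hZ := masterODE k v hv
  have hb : ((k:PowerSeries ℚ)+1) * Dop v - (k:PowerSeries ℚ) * (v * Dop v)
      - ((k:PowerSeries ℚ)+1) * v^2 + ((k:PowerSeries ℚ)+1) * v = 0 := by
    linear_combination hZ
  have hA1 : Apow v w (j+1) = Apow v w j * v := Apow_succ v w hw j
  have hA0 : Apow v w j = Apow v w (j-1) * v := by
    have := Apow_succ v w hw (j-1)
    rwa [sub_add_cancel] at this
  rw [Dop_Apow v w hw j, Dop_Apow v w hw (j+1), add_sub_cancel_right, hA1, hA0]
  push_cast
  linear_combination ((j:PowerSeries ℚ) * ((j:PowerSeries ℚ)+1) * Apow v w (j-1)) * hb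

lemma Rrec (k : ℕ) (v w : PowerSeries ℚ) (hv : v = 1 + X^(k+1) * v^(k+1))
    (hw : w * v = 1) (j : ℤ) (n : ℕ) :
    (j:ℚ)*((k:ℚ)*(n:ℚ) + ((k:ℚ)+1)*((j:ℚ)+1)) * coeff n (Apow v w (j+1))
      = ((k:ℚ)+1)*((j:ℚ)+1)*((n:ℚ)+(j:ℚ)) * coeff n (Apow v w j) := by
  have hs := star k v w hv hw j
  have eK : ((k:PowerSeries ℚ)+1) = C ((k:ℚ)+1) := by rw [map_add, map_natCast, map_one]
  have eJ : ((j:PowerSeries ℚ)+1) = C ((j:ℚ)+1) := by rw [map_add, map_intCast, map_one]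
  have eK0 : ((k:ℕ) : PowerSeries ℚ) = C ((k:ℚ)) := (map_natCast _ _).symm
  have eJ0 : ((j:ℤ) : PowerSeries ℚ) = C ((j:ℚ)) := (map_intCast _ _).symm
  rw [eK, eJ, eK0, eJ0] at hs
  have h := congrArg (coeff n) hs
  simp only [mul_assoc, map_sub, coeff_C_mul, coeff_Dop, mul_sub] at h
  linear_combination - h

lemma ccv (k : ℕ) (v : PowerSeries ℚ) (hv : v = 1 + X^(k+1) * v^(k+1)) :
    constantCoeff v = 1 := by
  conv_lhs => rw [hv]
  simp [map_mul, map_pow, constantCoeff_X]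

lemma ccw (v w : PowerSeries ℚ) (hcv : constantCoeff v = 1) (hw : w * v = 1) :
    constantCoeff w = 1 := by
  have := congrArg (constantCoeff) hw
  rw [map_mul, hcv, mul_one, map_one] at this
  exact this

lemma ccApow (k : ℕ) (v w : PowerSeries ℚ) (hv : v = 1 + X^(k+1) * v^(k+1))
    (hw : w * v = 1) (j : ℤ) : coeff 0 (Apow v w j) = 1 := by
  have hcv := ccv k v hv
  have hcw := ccw v w hcv hw
  rw [coeff_zero_eq_constantCoeff]
  unfold Apow
  split_ifs <;> rw [map_pow] <;> simp [hcv, hcw]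

lemma wEq (k : ℕ) (v w : PowerSeries ℚ) (hv : v = 1 + X^(k+1) * v^(k+1))
    (hw : w * v = 1) : w = 1 - X^(k+1) * v^k := by
  have h : w * (X^(k+1) * v^(k+1)) = X^(k+1) * v^k * (w * v) := by ring
  calc w = w * v - w * (X^(k+1)*v^(k+1)) := by
            conv_lhs => rw [show w = w * v - w * (v - 1) by ring]
            rw [show v - 1 = X^(k+1)*v^(k+1) by linear_combination hv]
       _ = 1 - X^(k+1) * v^k := by rw [h, hw, mul_one]

lemma modX (k : ℕ) (v w : PowerSeries ℚ) (hv : v = 1 + X^(k+1) * v^(k+1))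
    (hw : w * v = 1) (j : ℤ) : ∃ g, Apow v w j = 1 + X^(k+1) * g := by
  have hbase : ∀ (f : PowerSeries ℚ), (∃ g, f = 1 + X^(k+1)*g) → ∀ m : ℕ,
      ∃ g, f ^ m = 1 + X^(k+1)*g := by
    intro f hf m
    obtain ⟨g0, hg0⟩ := hf
    induction m with
    | zero => exact ⟨0, by simp⟩
    | succ l ih =>
      obtain ⟨g, hg⟩ := ih
      refine ⟨g + g0 + X^(k+1)*g*g0, ?_⟩
      rw [pow_succ, hg, hg0]
      ring
  have hvmod : ∃ g, v = 1 + X^(k+1)*g := ⟨v^(k+1), hv⟩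
  have hwmod : ∃ g, w = 1 + X^(k+1)*g := ⟨-(v^k), by rw [wEq k v w hv hw]; ring⟩
  unfold Apow
  split_ifs
  · exact hbase v hvmod _
  · exact hbase w hwmod _

lemma coeff_small (k : ℕ) (v w : PowerSeries ℚ) (hv : v = 1 + X^(k+1) * v^(k+1))
    (hw : w * v = 1) (j : ℤ) (n : ℕ) (h1 : 1 ≤ n) (h2 : n ≤ k) :
    coeff n (Apow v w j) = 0 := by
  obtain ⟨g, hg⟩ := modX k v w hv hw j
  rw [hg, map_add, coeff_X_pow_mul' , if_neg (by omega)]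
  rw [coeff_one, if_neg (by omega)]
  ring

lemma fe_v (k : ℕ) (v w : PowerSeries ℚ) (hv : v = 1 + X^(k+1) * v^(k+1))
    (hw : w * v = 1) (n : ℕ) :
    coeff (n + (k+1)) v = coeff n (Apow v w (k+1)) := by
  conv_lhs => rw [hv]
  rw [map_add, coeff_one, if_neg (by omega), coeff_X_pow_mul, zero_add]
  rw [show ((k:ℤ)+1) = ((k+1 : ℕ):ℤ) by push_cast; ring, Apow_natCast]

lemma fe_w (k : ℕ) (v w : PowerSeries ℚ) (hv : v = 1 + X^(k+1) * v^(k+1))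
    (hw : w * v = 1) (n : ℕ) :
    coeff (n + (k+1)) w = - coeff n (Apow v w k) := by
  rw [wEq k v w hv hw, map_sub, coeff_one, if_neg (by omega), coeff_X_pow_mul,
    Apow_natCast]
  ring

noncomputable def Ff (k : ℕ) (j : ℤ) (lam : ℕ) : ℚ :=
  (j:ℚ) / ((((k:ℤ)+1)*lam + j : ℤ) : ℚ)
    * (((((k:ℤ)+1)*lam + j).toNat.choose lam : ℕ) : ℚ)

lemma Ff_zero_lam (k : ℕ) (j : ℤ) (hj : j ≠ 0) : Ff k j 0 = 1 := by
  unfold Ff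
  simp only [Nat.cast_zero, mul_zero, zero_add, Nat.choose_zero_right, Nat.cast_one, mul_one]
  rw [div_self]
  exact_mod_cast hj

lemma Ff_zero_j (k : ℕ) (lam : ℕ) : Ff k 0 lam = 0 := by
  unfold Ff; simp

lemma Fstep (k : ℕ) (j : ℤ) (hjl : -(k:ℤ) ≤ j) (hju : j ≤ k) (lam : ℕ) (hlam : 1 ≤ lam) :
    ((k:ℚ)+1)*((j:ℚ)+1)*((((k+1)*lam : ℕ):ℚ)+(j:ℚ)) * Ff k j lam
      = (j:ℚ)*((k:ℚ)*(((k+1)*lam : ℕ):ℚ) + ((k:ℚ)+1)*((j:ℚ)+1)) * Ff k (j+1) lam := by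
  obtain ⟨N, hN⟩ : ∃ N : ℕ, ((k:ℤ)+1)*lam + j = (N:ℤ) :=
    ⟨(((k:ℤ)+1)*lam + j).toNat, by
      have hlam' : (1:ℤ) ≤ (lam:ℤ) := by exact_mod_cast hlam
      have hbig : ((k:ℤ)) + (lam:ℤ) ≤ ((k:ℤ)+1)*(lam:ℤ) := by nlinarith
      omega⟩
  have hlam' : (1:ℤ) ≤ (lam:ℤ) := by exact_mod_cast hlam
  have hbig : ((k:ℤ)) + (lam:ℤ) ≤ ((k:ℤ)+1)*(lam:ℤ) := by nlinarith
  have hN1 : 1 ≤ N := by omega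
  have hlN : lam ≤ N := by omega
  have ht1 : (((k:ℤ)+1)*lam + j).toNat = N := by omega
  have ht2 : (((k:ℤ)+1)*lam + (j+1)).toNat = N + 1 := by omega
  have hnq : ((((k+1)*lam : ℕ)):ℚ) = (N:ℚ) - (j:ℚ) := by
    have : (((k+1)*lam : ℕ) : ℤ) = (N:ℤ) - j := by push_cast; omega
    exact_mod_cast congrArg (Int.cast : ℤ → ℚ) this
  have key : ((N:ℚ)+1-(lam:ℚ)) * ((N+1).choose lam : ℚ) = ((N:ℚ)+1) * (N.choose lam : ℚ) := by
    have h := Nat.choose_mul_succ_eq N lam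
    have hc : ((N.choose lam * (N+1) : ℕ) : ℚ) = (((N+1).choose lam * (N+1-lam) : ℕ) : ℚ) := by
      exact_mod_cast congrArg (Nat.cast : ℕ → ℚ) h
    push_cast [Nat.cast_sub (by omega : lam ≤ N+1)] at hc
    linarith
  have hlq : ((k:ℚ)+1)*(lam:ℚ) = (N:ℚ) - (j:ℚ) := by
    have : (((k:ℤ)+1)*lam : ℤ) = (N:ℤ) - j := by omega
    exact_mod_cast congrArg (Int.cast : ℤ → ℚ) this
  have hN2 : ((k:ℤ)+1)*lam + (j+1) = ((N+1:ℕ):ℤ) := by omega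
  unfold Ff
  rw [ht1, ht2, hN, hN2, hnq]
  push_cast
  have hNne : (N:ℚ) ≠ 0 := by
    have : (0:ℚ) < N := by exact_mod_cast hN1
    linarith
  have hN1ne : (N:ℚ)+1 ≠ 0 := by positivity
  set A := (N.choose lam : ℚ) with hA
  set B := ((N+1).choose lam : ℚ) with hB
  rw [div_mul_eq_mul_div, div_mul_eq_mul_div, mul_div_assoc', mul_div_assoc',
    div_eq_div_iff hNne hN1ne]
  linear_combination (-(j:ℚ)*((j:ℚ)+1)*(N:ℚ)*((k:ℚ)+1)) * key
    + (-(j:ℚ)*((j:ℚ)+1)*(N:ℚ)*B) * hlq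

lemma Fconv1 (k l : ℕ) : Ff k ((k:ℤ)+1) l = Ff k 1 (l+1) := by
  set n : ℕ := (k+1)*(l+1) with hn
  have e1 : ((k:ℤ)+1)*(l:ℤ) + ((k:ℤ)+1) = ((n:ℕ):ℤ) := by push_cast [hn]; ring
  have e2 : ((k:ℤ)+1)*((l+1:ℕ):ℤ) + 1 = (((n+1):ℕ):ℤ) := by push_cast [hn]; ring
  have hn1 : 1 ≤ n := by
    have := Nat.mul_pos (by omega : 0 < k+1) (by omega : 0 < l+1)
    omega
  unfold Ff
  rw [e1, e2, show ((n:ℕ):ℤ).toNat = n by omega, show (((n+1):ℕ):ℤ).toNat = n+1 by omega]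
  push_cast
  have key := Nat.add_one_mul_choose_eq n l
  have keyq : ((n:ℚ)+1) * (n.choose l : ℚ) = ((n+1).choose (l+1) : ℚ) * ((l:ℚ)+1) := by
    exact_mod_cast congrArg (Nat.cast : ℕ → ℚ) key
  have hnne : (n:ℚ) ≠ 0 := by
    have : (0:ℚ) < n := by exact_mod_cast hn1
    linarith
  have hnne1 : (n:ℚ)+1 ≠ 0 := by positivity
  rw [div_mul_eq_mul_div, div_mul_eq_mul_div, div_eq_div_iff hnne hnne1]
  have hkl : ((k:ℚ)+1) * ((l:ℚ)+1) = (n:ℚ) := by push_cast [hn]; ring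
  linear_combination ((k:ℚ)+1) * keyq + (((n+1).choose (l+1) : ℚ)) * hkl

lemma Fconvm1 (k l : ℕ) (hk : 1 ≤ k) : Ff k (-1) (l+1) = - Ff k (k:ℤ) l := by
  set M : ℕ := (k+1)*(l+1) - 1 with hM
  have hM' : (M:ℤ) = ((k:ℤ)+1)*((l:ℤ)+1) - 1 := by
    have : (k+1)*(l+1) = M + 1 := by
      have := Nat.mul_pos (by omega : 0 < k+1) (by omega : 0 < l+1)
      omega
    have := congrArg (Nat.cast : ℕ → ℤ) this
    push_cast at this
    linarith
  have e1 : ((k:ℤ)+1)*((l+1:ℕ):ℤ) + (-1) = ((M:ℕ):ℤ) := by push_cast; linear_combination - hM'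
  have e2 : ((k:ℤ)+1)*(l:ℤ) + (k:ℤ) = ((M:ℕ):ℤ) := by push_cast; linear_combination - hM'
  have hM1 : k ≤ M := by
    have hkl : k+1 ≤ (k+1)*(l+1) := Nat.le_mul_of_pos_right _ (by omega)
    omega
  have hlM : l ≤ M := by
    have hkl : 1*(l+1) ≤ (k+1)*(l+1) := Nat.mul_le_mul_right _ (by omega)
    omega
  have hMsub : M - l = k * (l+1) := by
    have : M + 1 = (k+1)*(l+1) := by
      have := Nat.mul_pos (by omega : 0 < k+1) (by omega : 0 < l+1)
      omega
    have h2 : (k+1)*(l+1) = k*(l+1) + (l+1) := by ring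
    omega
  have key : M.choose (l+1) = k * M.choose l := by
    have h1 := Nat.choose_succ_right_eq M l
    rw [hMsub] at h1
    have h2 : M.choose (l+1) * (l+1) = k * M.choose l * (l+1) := by rw [h1]; ring
    exact Nat.eq_of_mul_eq_mul_right (by omega) h2
  unfold Ff
  rw [e1, e2, show ((M:ℕ):ℤ).toNat = M by omega]
  push_cast [key]
  ring

lemma Ffinal (k l : ℕ) (hk : 1 ≤ k) :
    Ff k (-(k:ℤ)) (l+1) = -((k:ℚ)/((l:ℚ)+1) * (((k+1)*l).choose l : ℚ)) := by
  set P : ℕ := (k+1)*l + 1 with hP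
  have e1 : ((k:ℤ)+1)*((l+1:ℕ):ℤ) + (-(k:ℤ)) = ((P:ℕ):ℤ) := by push_cast [hP]; ring
  have key := Nat.add_one_mul_choose_eq ((k+1)*l) l
  have keyq : ((((k+1)*l : ℕ):ℚ)+1) * (((k+1)*l).choose l : ℚ)
      = ((P).choose (l+1) : ℚ) * ((l:ℚ)+1) := by
    rw [hP]; exact_mod_cast congrArg (Nat.cast : ℕ → ℚ) key
  have hPq : (P:ℚ) = (((k+1)*l : ℕ):ℚ) + 1 := by push_cast [hP]; ring
  have hPne : (P:ℚ) ≠ 0 := by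
    have : (0:ℚ) < P := by exact_mod_cast (by omega : 0 < P)
    linarith
  have hlne : (l:ℚ)+1 ≠ 0 := by positivity
  unfold Ff
  rw [e1, show ((P:ℕ):ℤ).toNat = P by omega]
  push_cast
  have hc : (((k+1)*l : ℕ):ℚ) = ((k:ℚ)+1)*(l:ℚ) := by push_cast; ring
  field_simp
  linear_combination keyq + ((((k+1)*l).choose l : ℚ)) * hPq

lemma zeroLem (k : ℕ) (v w : PowerSeries ℚ) (hv : v = 1 + X^(k+1) * v^(k+1))
    (hw : w * v = 1) :
    ∀ n : ℕ, 1 ≤ n → ¬((k+1) ∣ n) → ∀ j : ℤ, -(k:ℤ) ≤ j → j ≤ (k:ℤ)+1 →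
      coeff n (Apow v w j) = 0 := by
  intro n
  induction n using Nat.strong_induction_on with
  | _ n IH =>
  intro hn1 hnd j hjl hju
  rcases le_or_gt n k with hsmall | hbig
  · exact coeff_small k v w hv hw j n hn1 hsmall
  have hnk : n ≠ k+1 := by rintro rfl; exact hnd ⟨1, by ring⟩
  have hn2 : k+2 ≤ n := by omega
  set m := n - (k+1) with hm
  have hmn : m + (k+1) = n := by omega
  have hm1 : 1 ≤ m := by omega
  have hmd : ¬((k+1) ∣ m) := by
    rintro ⟨c, hc⟩
    refine hnd ⟨c+1, ?_⟩
    have : (k+1)*(c+1) = (k+1)*c + (k+1) := by ring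
    omega
  have hmlt : m < n := by omega
  have h1 : coeff n (Apow v w 1) = 0 := by
    rw [show (1:ℤ) = ((1:ℕ):ℤ) by norm_num, Apow_natCast, pow_one, ← hmn,
      fe_v k v w hv hw m]
    exact IH m hmlt hm1 hmd ((k:ℤ)+1) (by omega) (by omega)
  have hup : ∀ i : ℕ, 1 ≤ i → i ≤ k+1 → coeff n (Apow v w (i:ℤ)) = 0 := by
    intro i
    induction i with
    | zero => omega
    | succ p IHp =>
      intro _ hile
      rcases Nat.eq_zero_or_pos p with rfl | hp1
      · exact h1
      · have hr := Rrec k v w hv hw (p:ℤ) n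
        rw [IHp (by omega) (by omega), mul_zero] at hr
        have hc : ((p:ℤ):ℚ)*((k:ℚ)*(n:ℚ) + ((k:ℚ)+1)*(((p:ℤ):ℚ)+1)) ≠ 0 := by
          have e1 : (0:ℚ) < ((p:ℤ):ℚ) := by exact_mod_cast (show (0:ℤ) < p by omega)
          have e2 : (0:ℚ) ≤ (k:ℚ)*(n:ℚ) := by positivity
          have e3 : (0:ℚ) < ((k:ℚ)+1)*(((p:ℤ):ℚ)+1) := by
            have : (0:ℚ) < (k:ℚ)+1 := by positivity
            nlinarith
          nlinarith
        have := mul_eq_zero.mp hr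
        rcases this with h | h
        · exact absurd h hc
        · rw [show ((p+1:ℕ):ℤ) = (p:ℤ)+1 by push_cast; ring]
          exact h
  have hm1' : coeff n (Apow v w (-1)) = 0 := by
    rw [show (-1:ℤ) = -((1:ℕ):ℤ) by norm_num, Apow_neg_natCast, pow_one, ← hmn,
      fe_w k v w hv hw m]
    rw [IH m hmlt hm1 hmd ((k:ℕ):ℤ) (by omega) (by omega)]
    ring
  have hdown : ∀ i : ℕ, 1 ≤ i → i ≤ k → coeff n (Apow v w (-(i:ℤ))) = 0 := by
    intro i
    induction i with
    | zero => omega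
    | succ p IHp =>
      intro _ hile
      rcases Nat.eq_zero_or_pos p with rfl | hp1
      · exact hm1'
      · have hr := Rrec k v w hv hw (-((p:ℤ)+1)) n
        rw [show -((p:ℤ)+1)+1 = -(p:ℤ) by ring, IHp (by omega) (by omega), mul_zero] at hr
        have hc : ((k:ℚ)+1)*(((( -((p:ℤ)+1)) : ℤ) : ℚ)+1)*((n:ℚ)+((( -((p:ℤ)+1)) : ℤ) : ℚ)) ≠ 0 := by
          have e1 : (0:ℚ) < (k:ℚ)+1 := by positivity
          have e3 : (0:ℚ) < (p:ℚ) := by exact_mod_cast hp1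
          have e5 : (0:ℚ) < (n:ℚ) - (p:ℚ) - 1 := by
            have : ((p:ℚ)) + 2 ≤ (n:ℚ) := by exact_mod_cast (show p + 2 ≤ n by omega)
            linarith
          have hprod : (0:ℚ) < ((k:ℚ)+1)*(p:ℚ)*((n:ℚ)-(p:ℚ)-1) :=
            mul_pos (mul_pos e1 e3) e5
          have hlt : ((k:ℚ)+1)*(((( -((p:ℤ)+1)) : ℤ) : ℚ)+1)*((n:ℚ)+((( -((p:ℤ)+1)) : ℤ) : ℚ)) < 0 := by
            push_cast
            nlinarith [hprod]
          exact ne_of_lt hlt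
        have := mul_eq_zero.mp hr.symm
        rcases this with h | h
        · exact absurd h hc
        · rw [show -((p+1:ℕ):ℤ) = -((p:ℤ)+1) by push_cast; ring]
          exact h
  rcases lt_trichotomy j 0 with hneg | hzero | hpos
  · obtain ⟨i, rfl⟩ : ∃ i : ℕ, j = -(i:ℤ) := ⟨(-j).toNat, by omega⟩
    exact hdown i (by omega) (by omega)
  · subst hzero
    rw [Apow_zero]
    rw [coeff_one, if_neg (by omega)]
  · obtain ⟨i, rfl⟩ : ∃ i : ℕ, j = (i:ℤ) := ⟨j.toNat, by omega⟩
    exact hup i (by omega) (by omega)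

lemma mainLem (k : ℕ) (v w : PowerSeries ℚ) (hv : v = 1 + X^(k+1) * v^(k+1))
    (hw : w * v = 1) (hk : 1 ≤ k) :
    ∀ lam : ℕ, ∀ j : ℤ, -(k:ℤ) ≤ j → j ≤ (k:ℤ)+1 → j ≠ 0 →
      coeff ((k+1)*lam) (Apow v w j) = Ff k j lam := by
  intro lam
  induction lam using Nat.strong_induction_on with
  | _ lam IH =>
  intro j hjl hju hj0
  rcases Nat.eq_zero_or_pos lam with rfl | hlam
  · rw [Nat.mul_zero, ccApow k v w hv hw j, Ff_zero_lam k j hj0]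
  obtain ⟨l, rfl⟩ : ∃ l, lam = l + 1 := ⟨lam - 1, by omega⟩
  have hnm : (k+1)*l + (k+1) = (k+1)*(l+1) := by ring
  have h1 : coeff ((k+1)*(l+1)) (Apow v w 1) = Ff k 1 (l+1) := by
    rw [show (1:ℤ) = ((1:ℕ):ℤ) by norm_num, Apow_natCast, pow_one, ← hnm,
      fe_v k v w hv hw ((k+1)*l)]
    rw [IH l (by omega) ((k:ℤ)+1) (by omega) (by omega) (by omega)]
    exact Fconv1 k l
  have hup : ∀ i : ℕ, 1 ≤ i → i ≤ k+1 →
      coeff ((k+1)*(l+1)) (Apow v w (i:ℤ)) = Ff k (i:ℤ) (l+1) := by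
    intro i
    induction i with
    | zero => omega
    | succ p IHp =>
      intro _ hile
      rcases Nat.eq_zero_or_pos p with rfl | hp1
      · exact h1
      · have hr := Rrec k v w hv hw ((p:ℕ):ℤ) ((k+1)*(l+1))
        rw [IHp (by omega) (by omega)] at hr
        have hF := Fstep k ((p:ℕ):ℤ) (by omega) (by omega) (l+1) (by omega)
        have hcne : ((((p:ℕ):ℤ)):ℚ)*((k:ℚ)*((((k+1)*(l+1)):ℕ):ℚ)
            + ((k:ℚ)+1)*(((((p:ℕ):ℤ)):ℚ)+1)) ≠ 0 := by
          have e1 : (0:ℚ) < ((((p:ℕ):ℤ)):ℚ) := by exact_mod_cast (show (0:ℤ) < p by omega)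
          have e2 : (0:ℚ) ≤ (k:ℚ)*((((k+1)*(l+1)):ℕ):ℚ) := by positivity
          have e3 : (0:ℚ) < ((k:ℚ)+1)*(((((p:ℕ):ℤ)):ℚ)+1) := by nlinarith
          nlinarith
        rw [show ((p+1:ℕ):ℤ) = ((p:ℕ):ℤ)+1 by push_cast; ring]
        exact mul_left_cancel₀ hcne (by linear_combination hr + hF)
  have hm1' : coeff ((k+1)*(l+1)) (Apow v w (-1)) = Ff k (-1) (l+1) := by
    have hA : Apow v w (-1 : ℤ) = w := by
      rw [show (-1:ℤ) = -((1:ℕ):ℤ) by norm_num, Apow_neg_natCast, pow_one]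
    rw [hA, ← hnm, fe_w k v w hv hw ((k+1)*l)]
    rw [IH l (by omega) ((k:ℕ):ℤ) (by omega) (by omega) (by exact_mod_cast (by omega : k ≠ 0))]
    linear_combination - Fconvm1 k l hk
  have hdown : ∀ i : ℕ, 1 ≤ i → i ≤ k →
      coeff ((k+1)*(l+1)) (Apow v w (-(i:ℤ))) = Ff k (-(i:ℤ)) (l+1) := by
    intro i
    induction i with
    | zero => omega
    | succ p IHp =>
      intro _ hile
      rcases Nat.eq_zero_or_pos p with rfl | hp1
      · simpa using hm1'
      · have hr := Rrec k v w hv hw (-((p:ℤ)+1)) ((k+1)*(l+1))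
        rw [show -((p:ℤ)+1)+1 = -((p:ℕ):ℤ) by push_cast; ring] at hr
        rw [IHp (by omega) (by omega)] at hr
        have hF := Fstep k (-((p:ℤ)+1)) (by omega) (by omega) (l+1) (by omega)
        rw [show -((p:ℤ)+1)+1 = -((p:ℕ):ℤ) by push_cast; ring] at hF
        have hcne : ((k:ℚ)+1)*((((-((p:ℤ)+1)):ℤ):ℚ)+1)
            *(((((k+1)*(l+1)):ℕ):ℚ)+(((-((p:ℤ)+1)):ℤ):ℚ)) ≠ 0 := by
          have e1 : (0:ℚ) < (k:ℚ)+1 := by positivity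
          have e3 : (0:ℚ) < (p:ℚ) := by exact_mod_cast hp1
          have e5 : (0:ℚ) < ((k:ℚ)+1)*((l:ℚ)+1) - (p:ℚ) - 1 := by
            have h6 : ((p:ℚ)) + 2 ≤ ((k:ℚ)+1)*((l:ℚ)+1) := by
              have h7 : p + 2 ≤ (k+1)*(l+1) := by
                have h8 : (k+1)*(l+1) = (k+1)*l + k + 1 := by ring
                omega
              exact_mod_cast h7
            linarith
          have hprod : (0:ℚ) < ((k:ℚ)+1)*(p:ℚ)*(((k:ℚ)+1)*((l:ℚ)+1)-(p:ℚ)-1) :=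
            mul_pos (mul_pos e1 e3) e5
          have hlt : ((k:ℚ)+1)*((((-((p:ℤ)+1)):ℤ):ℚ)+1)
              *(((((k+1)*(l+1)):ℕ):ℚ)+(((-((p:ℤ)+1)):ℤ):ℚ)) < 0 := by
            push_cast
            nlinarith [hprod]
          exact ne_of_lt hlt
        rw [show (-((p+1:ℕ):ℤ)) = -((p:ℤ)+1) by push_cast; ring]
        exact mul_left_cancel₀ hcne (by linear_combination - hr - hF)
  rcases lt_trichotomy j 0 with hneg | hzero | hpos
  · obtain ⟨i, rfl⟩ : ∃ i : ℕ, j = -(i:ℤ) := ⟨(-j).toNat, by omega⟩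
    exact hdown i (by omega) (by omega)
  · exact absurd hzero hj0
  · obtain ⟨i, rfl⟩ : ∃ i : ℕ, j = (i:ℤ) := ⟨j.toNat, by omega⟩
    exact hup i (by omega) (by omega)

/-- In the field of formal Laurent series over ℚ, the solution `û` of `û = z + z·û^(k+1)`
satisfies `û^(−k) = z^(−k) − z·Σ_{λ≥0} (k/(λ+1))·binomial((k+1)λ, λ)·z^((k+1)λ)`,
stated coefficientwise. -/
theorem coeff_uhat_inv_pow (k : ℕ) (hk : 1 ≤ k) (u : PowerSeries ℚ)
    (h0 : constantCoeff u = 0)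
    (heq : u = X + X * u ^ (k + 1)) :
    ((((u : LaurentSeries ℚ)) ^ (-(k : ℤ))).coeff (-(k : ℤ)) = 1) ∧
      (∀ l : ℕ, (((u : LaurentSeries ℚ)) ^ (-(k : ℤ))).coeff (((k : ℤ) + 1) * l + 1) =
        -((k : ℚ) / (l + 1) * (((k + 1) * l).choose l : ℚ))) ∧
      (∀ d : ℤ, d ≠ -(k : ℤ) → (∀ l : ℕ, d ≠ ((k : ℤ) + 1) * l + 1) →
        (((u : LaurentSeries ℚ)) ^ (-(k : ℤ))).coeff d = 0) := by
  set v : PowerSeries ℚ := 1 + u^(k+1) with hvdef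
  have huv : u = X * v := by
    rw [hvdef]; conv_lhs => rw [heq]
    ring
  have hv : v = 1 + X^(k+1) * v^(k+1) := by
    conv_lhs => rw [hvdef]
    rw [show u^(k+1) = X^(k+1)*v^(k+1) by rw [huv, mul_pow]]
  have hcv : constantCoeff v = 1 := ccv k v hv
  set w : PowerSeries ℚ := v⁻¹ with hwdef
  have hw : w * v = 1 := by
    rw [hwdef]
    exact PowerSeries.inv_mul_cancel v (by rw [hcv]; norm_num)
  have hApow : Apow v w (-(k:ℤ)) = w^k := Apow_neg_natCast v w k
  -- Laurent series decomposition
  have hL : (u : LaurentSeries ℚ) ^ (-(k : ℤ))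
      = (HahnSeries.single (-(k:ℤ)) (1:ℚ)) * ((w^k : PowerSeries ℚ) : LaurentSeries ℚ) := by
    have hprod : ((u : LaurentSeries ℚ))^k
        * ((HahnSeries.single (-(k:ℤ)) (1:ℚ)) * ((w^k : PowerSeries ℚ) : LaurentSeries ℚ))
        = 1 := by
      rw [huv]
      push_cast [PowerSeries.coe_mul, PowerSeries.coe_X]
      rw [mul_pow, mul_assoc, ← mul_assoc (((v : PowerSeries ℚ) : LaurentSeries ℚ)^k),
        mul_comm (((v : PowerSeries ℚ) : LaurentSeries ℚ)^k), ← mul_assoc, ← mul_assoc,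
        HahnSeries.single_pow, one_pow, HahnSeries.single_mul_single, one_mul]
      rw [show (k • (1:ℤ)) + (-(k:ℤ)) = 0 by simp]
      rw [HahnSeries.single_zero_one, one_mul]
      rw [← PowerSeries.coe_pow, ← PowerSeries.coe_pow, ← PowerSeries.coe_mul]
      rw [show v^k * w^k = (w*v)^k by rw [mul_pow]; ring, hw, one_pow, PowerSeries.coe_one]
    rw [show (-(k:ℤ)) = -((k:ℕ):ℤ) from rfl, zpow_neg, zpow_natCast]
    exact inv_eq_of_mul_eq_one_right hprod
  have hcoeff : ∀ d : ℤ, ((u : LaurentSeries ℚ) ^ (-(k : ℤ))).coeff d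
      = if d + k < 0 then 0 else coeff (d + k).natAbs (w^k) := by
    intro d
    conv_lhs => rw [hL, show d = (d + (k:ℤ)) + (-(k:ℤ)) by ring]
    rw [HahnSeries.coeff_single_mul_add, one_mul]
    rw [PowerSeries.coeff_coe]
  refine ⟨?_, ?_, ?_⟩
  · rw [hcoeff, if_neg (by omega), show ((-(k:ℤ))+(k:ℤ)).natAbs = 0 by omega]
    rw [← hApow]
    exact ccApow k v w hv hw _
  · intro l
    have hidx : ((k:ℤ)+1)*l + 1 + (k:ℤ) = (((k+1)*(l+1) : ℕ):ℤ) := by push_cast; ring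
    rw [hcoeff, hidx, if_neg (by omega), Int.natAbs_natCast, ← hApow]
    rw [mainLem k v w hv hw hk (l+1) (-(k:ℤ)) (by omega) (by omega) (by omega)]
    exact Ffinal k l hk
  · intro d hd1 hd2
    rw [hcoeff]
    split_ifs with hneg
    · rfl
    · have hge : 0 ≤ d + k := by omega
      set n : ℕ := (d + k).natAbs with hn
      have hdn : d + (k:ℤ) = (n:ℤ) := by omega
      have hn1 : 1 ≤ n := by omega
      by_cases hdvd : (k+1) ∣ n
      · obtain ⟨c, hc⟩ := hdvd
        have hc1 : 1 ≤ c := by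
          rcases Nat.eq_zero_or_pos c with rfl | h
          · omega
          · exact h
        exfalso
        apply hd2 (c-1)
        have : ((c:ℤ)) - 1 = ((c-1 : ℕ):ℤ) := by omega
        rw [← this]
        have hcz : (n:ℤ) = ((k:ℤ)+1)*c := by exact_mod_cast congrArg (Nat.cast : ℕ → ℤ) hc
        have hexp : ((k:ℤ)+1)*((c:ℤ)-1) = ((k:ℤ)+1)*(c:ℤ) - ((k:ℤ)+1) := by ring
        omega
      · rw [← hApow]
        exact zeroLem k v w hv hw n hn1 hdvd (-(k:ℤ)) (by omega) (by omega)
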